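/- Let V ⊆ ℂⁿ be a set, ι(x) = x/‖x‖², and A = ι(V \ {0}) ∪ {0}. Then the tangent cone of V at infinity equals the tangent cone of A at 0: C(V, ∞) = C(A, 0). -/

import Mathlib

open Set Metric Filter Topology

/-- The tangent cone of `X` at `p`: limits of `(xⱼ − p)/tⱼ` with `xⱼ ∈ X`, `tⱼ → 0⁺`. -/
def tangentConeSeqAt {E : Type*} [NormedAddCommGroup E] [NormedSpace ℝ E]
    (X : Set E) (p : E) : Set E :=
  {v | ∃ (x : ℕ → E) (t : ℕ → ℝ), (∀ j, x j ∈ X) ∧ (∀ j, 0 < t j) ∧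
    Tendsto t atTop (𝓝 0) ∧ Tendsto (fun j => (t j)⁻¹ • (x j - p)) atTop (𝓝 v)}

/-- The tangent cone of `V` at infinity: limits of `xⱼ/tⱼ` with `xⱼ ∈ V`, `tⱼ → +∞`. -/
def tangentConeAtInfty {E : Type*} [NormedAddCommGroup E] [NormedSpace ℝ E]
    (V : Set E) : Set E :=
  {v | ∃ (x : ℕ → E) (t : ℕ → ℝ), (∀ j, x j ∈ V) ∧ (∀ j, 0 < t j) ∧
    Tendsto t atTop atTop ∧ Tendsto (fun j => (t j)⁻¹ • x j) atTop (𝓝 v)}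

section aux
variable {E : Type*} [NormedAddCommGroup E] [NormedSpace ℝ E]

noncomputable def iotaInv (x : E) : E := (‖x‖ ^ 2)⁻¹ • x

lemma iotaInv_invol {x : E} (hx : x ≠ 0) : iotaInv (iotaInv x) = x := by
  have h : ‖x‖ ≠ 0 := norm_ne_zero_iff.2 hx
  have h2 : ‖x‖ ^ 2 ≠ 0 := pow_ne_zero _ h
  have hn : ‖iotaInv x‖ = ‖x‖⁻¹ := by
    rw [iotaInv, norm_smul, norm_inv, norm_pow, norm_norm]
    field_simp [pow_two]
  rw [iotaInv, hn, iotaInv, smul_smul]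
  rw [inv_pow, inv_inv]
  field_simp
  rw [one_smul]

lemma iotaInv_algebra (y : E) (s : ℝ) (hy : y ≠ 0) (hs : s ≠ 0) :
    (s / ‖y‖ ^ 2)⁻¹ • iotaInv y = s⁻¹ • y := by
  have h2 : ‖y‖ ^ 2 ≠ 0 := pow_ne_zero _ (norm_ne_zero_iff.2 hy)
  rw [iotaInv, smul_smul]
  congr 1
  field_simp

lemma norm_lim {y : ℕ → E} {s : ℕ → ℝ} {v : E} (hs : ∀ j, 0 < s j)
    (h : Tendsto (fun j => (s j)⁻¹ • y j) atTop (𝓝 v)) :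
    Tendsto (fun j => (s j)⁻¹ * ‖y j‖) atTop (𝓝 ‖v‖) := by
  have := h.norm
  have heq : ∀ j, ‖(s j)⁻¹ • y j‖ = (s j)⁻¹ * ‖y j‖ := fun j => by
    rw [norm_smul, Real.norm_eq_abs, abs_of_pos (inv_pos.2 (hs j))]
  simpa [heq] using this

lemma ratio_eq {s : ℝ} {y : E} :
    s / ‖y‖ ^ 2 = s⁻¹ * ((s⁻¹ * ‖y‖) ^ 2)⁻¹ := by
  by_cases hs : s = 0
  · simp [hs]
  by_cases hy : ‖y‖ = 0
  · simp [hy]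
  · field_simp

lemma ratio_tendsto_atTop {y : ℕ → E} {s : ℕ → ℝ} {v : E} (hs : ∀ j, 0 < s j)
    (hv : v ≠ 0) (hr : Tendsto (fun j => (s j)⁻¹ * ‖y j‖) atTop (𝓝 ‖v‖))
    (hs0 : Tendsto s atTop (𝓝 0)) :
    Tendsto (fun j => s j / ‖y j‖ ^ 2) atTop atTop := by
  have hinv : Tendsto (fun j => (s j)⁻¹) atTop atTop := by
    apply Filter.Tendsto.inv_tendsto_nhdsGT_zero
    rw [tendsto_nhdsWithin_iff]
    exact ⟨hs0, Eventually.of_forall fun j => hs j⟩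
  have hsq : Tendsto (fun j => (((s j)⁻¹ * ‖y j‖) ^ 2)⁻¹) atTop (𝓝 ((‖v‖ ^ 2)⁻¹)) :=
    (hr.pow 2).inv₀ (pow_ne_zero _ (norm_ne_zero_iff.2 hv))
  have := hinv.atTop_mul_pos (C := (‖v‖ ^ 2)⁻¹)
    (inv_pos.2 (pow_pos (norm_pos_iff.2 hv) 2)) hsq
  exact this.congr fun j => ratio_eq.symm

lemma ratio_tendsto_zero {y : ℕ → E} {s : ℕ → ℝ} {v : E}
    (hv : v ≠ 0) (hr : Tendsto (fun j => (s j)⁻¹ * ‖y j‖) atTop (𝓝 ‖v‖))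
    (hsT : Tendsto s atTop atTop) :
    Tendsto (fun j => s j / ‖y j‖ ^ 2) atTop (𝓝 0) := by
  have hinv : Tendsto (fun j => (s j)⁻¹) atTop (𝓝 0) := hsT.inv_tendsto_atTop
  have hsq : Tendsto (fun j => (((s j)⁻¹ * ‖y j‖) ^ 2)⁻¹) atTop (𝓝 ((‖v‖ ^ 2)⁻¹)) :=
    (hr.pow 2).inv₀ (pow_ne_zero _ (norm_ne_zero_iff.2 hv))
  have := hinv.mul hsq
  rw [zero_mul] at this
  exact this.congr fun j => ratio_eq.symm

lemma eventually_ne_zero {y : ℕ → E} {s : ℕ → ℝ} {v : E} (hs : ∀ j, 0 < s j)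
    (hv : v ≠ 0) (hr : Tendsto (fun j => (s j)⁻¹ • y j) atTop (𝓝 v)) :
    ∃ N, ∀ j, y (j + N) ≠ 0 := by
  have hr' := norm_lim hs hr
  have h0 : (0 : ℝ) < ‖v‖ := norm_pos_iff.2 hv
  have : ∀ᶠ j in atTop, 0 < (s j)⁻¹ * ‖y j‖ := hr'.eventually_const_lt h0
  obtain ⟨N, hN⟩ := eventually_atTop.1 this
  refine ⟨N, fun j => ?_⟩
  intro h
  have := hN (j + N) (Nat.le_add_left _ _)
  rw [h] at this
  simp at this

end aux

lemma inv_nat_succ_tendsto : Tendsto (fun j : ℕ => ((j : ℝ) + 1)⁻¹) atTop (𝓝 0) := by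
  simpa [one_div] using tendsto_one_div_add_atTop_nhds_zero_nat (𝕜 := ℝ)

/-- For a nonempty `V ⊆ ℂⁿ` and `A = ι(V \ {0}) ∪ {0}` with `ι(x) = x/‖x‖²`, the tangent cone
of `V` at infinity equals the tangent cone of `A` at `0`. -/
theorem stmt_16 {n : ℕ} (V : Set (EuclideanSpace ℂ (Fin n))) (hV : V.Nonempty) :
    tangentConeAtInfty V =
      tangentConeSeqAt
        ((fun x : EuclideanSpace ℂ (Fin n) => (‖x‖ ^ 2)⁻¹ • x) '' (V \ {0}) ∪ {0}) 0 := by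
  ext v
  constructor
  · rintro ⟨x, t, hxV, ht, htT, hlim⟩
    by_cases hv : v = 0
    · subst hv
      refine ⟨fun _ => 0, fun j => ((j : ℝ) + 1)⁻¹, fun j => Or.inr rfl,
        fun j => inv_pos.2 (by positivity), inv_nat_succ_tendsto, ?_⟩
      simpa using tendsto_const_nhds
    · obtain ⟨N, hN⟩ := eventually_ne_zero ht hv hlim
      set x' : ℕ → EuclideanSpace ℂ (Fin n) := fun j => x (j + N) with hx'
      set t' : ℕ → ℝ := fun j => t (j + N) with ht'
      have hlim' : Tendsto (fun j => (t' j)⁻¹ • x' j) atTop (𝓝 v) :=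
        hlim.comp (tendsto_add_atTop_nat N)
      have htT' : Tendsto t' atTop atTop := htT.comp (tendsto_add_atTop_nat N)
      have htp' : ∀ j, 0 < t' j := fun j => ht _
      have hr : Tendsto (fun j => (t' j)⁻¹ * ‖x' j‖) atTop (𝓝 ‖v‖) :=
        norm_lim htp' hlim'
      refine ⟨fun j => iotaInv (x' j), fun j => t' j / ‖x' j‖ ^ 2,
        fun j => Or.inl ⟨x' j, ⟨hxV _, hN j⟩, rfl⟩,
        fun j => div_pos (htp' j) (pow_pos (norm_pos_iff.2 (hN j)) 2),
        ratio_tendsto_zero hv hr htT', ?_⟩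
      have : ∀ j, (t' j / ‖x' j‖ ^ 2)⁻¹ • (iotaInv (x' j) - 0) = (t' j)⁻¹ • x' j := by
        intro j
        rw [sub_zero, iotaInv_algebra _ _ (hN j) (htp' j).ne']
      exact hlim'.congr fun j => (this j).symm
  · rintro ⟨a, s, haA, hs, hs0, hlim⟩
    simp only [sub_zero] at hlim
    by_cases hv : v = 0
    · subst hv
      obtain ⟨x0, hx0⟩ := hV
      refine ⟨fun _ => x0, fun j => (j : ℝ) + 1, fun _ => hx0,
        fun j => by positivity, tendsto_atTop_add_const_right _ 1 tendsto_natCast_atTop_atTop, ?_⟩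
      have := inv_nat_succ_tendsto.smul_const x0
      simpa using this
    · obtain ⟨N, hN⟩ := eventually_ne_zero hs hv hlim
      set a' : ℕ → EuclideanSpace ℂ (Fin n) := fun j => a (j + N) with ha'
      set s' : ℕ → ℝ := fun j => s (j + N) with hs'
      have hlim' : Tendsto (fun j => (s' j)⁻¹ • a' j) atTop (𝓝 v) :=
        hlim.comp (tendsto_add_atTop_nat N)
      have hs0' : Tendsto s' atTop (𝓝 0) := hs0.comp (tendsto_add_atTop_nat N)
      have hsp' : ∀ j, 0 < s' j := fun j => hs _
      have hr : Tendsto (fun j => (s' j)⁻¹ * ‖a' j‖) atTop (𝓝 ‖v‖) :=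
        norm_lim hsp' hlim'
      have hmem : ∀ j, ∃ y, (y ∈ V ∧ y ≠ 0) ∧ iotaInv y = a' j := by
        intro j
        rcases haA (j + N) with h | h
        · obtain ⟨y, ⟨hyV, hy0⟩, hyeq⟩ := h
          exact ⟨y, ⟨hyV, hy0⟩, hyeq⟩
        · exact absurd h (hN j)
      choose y hy hyeq using hmem
      have hxy : ∀ j, y j = iotaInv (a' j) := fun j => by
        rw [← hyeq j, iotaInv_invol (hy j).2]
      refine ⟨y, fun j => s' j / ‖a' j‖ ^ 2, fun j => (hy j).1,
        fun j => div_pos (hsp' j) (pow_pos (norm_pos_iff.2 (hN j)) 2),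
        ratio_tendsto_atTop hsp' hv hr hs0', ?_⟩
      have : ∀ j, (s' j / ‖a' j‖ ^ 2)⁻¹ • y j = (s' j)⁻¹ • a' j := by
        intro j
        rw [hxy j, iotaInv_algebra _ _ (hN j) (hsp' j).ne']
      exact hlim'.congr fun j => (this j).symm
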